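/- If a graph G (with no isolated vertex) has two nonadjacent vertices u and v such that v is not a support vertex and N(u) ⊆ N(v), then G is not γ_t-critical. -/
import Mathlib


open scoped Classical

namespace SimpleGraph

variable {V : Type*}

/-- A set `S` is a total dominating set if every vertex is adjacent to a vertex of `S`. -/
def IsTotalDomSet (G : SimpleGraph V) (S : Set V) : Prop :=
  ∀ v : V, ∃ u ∈ S, G.Adj v u

/-- The total domination number: minimum cardinality of a total dominating set. -/
noncomputable def totalDomNum (G : SimpleGraph V) [Fintype V] : ℕ :=
  sInf {n : ℕ | ∃ S : Finset V, G.IsTotalDomSet ↑S ∧ S.card = n}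

/-- The graph obtained by deleting the vertex `v`. -/
def deleteVert (G : SimpleGraph V) (v : V) : SimpleGraph {u : V // u ≠ v} :=
  G.induce {u : V | u ≠ v}

/-- A support vertex is a vertex adjacent to a leaf (a vertex of degree one). -/
noncomputable def IsSupportVertex (G : SimpleGraph V) [Fintype V] (v : V) : Prop :=
  ∃ u : V, G.Adj v u ∧ G.degree u = 1

/-- `G` is total domination vertex critical: it has no isolated vertex and deleting any
vertex that is not a support vertex decreases the total domination number. -/
noncomputable def IsTotalDomCritical (G : SimpleGraph V) [Fintype V] : Prop :=
  (∀ v : V, 0 < G.degree v) ∧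
  ∀ v : V, ¬ G.IsSupportVertex v →
    (G.deleteVert v).totalDomNum < G.totalDomNum

/-- if `G` (with no isolated vertex) has nonadjacent vertices `u` and `v`
with `v` not a support vertex and `N(u) ⊆ N(v)`, then `G` is not `γₜ`-critical. -/
theorem stmt5 {V : Type*} [Fintype V] (G : SimpleGraph V)
    (hiso : ∀ x : V, 0 < G.degree x)
    (u v : V) (huv : u ≠ v) (hadj : ¬ G.Adj u v)
    (hv : ¬ G.IsSupportVertex v)
    (hsub : G.neighborSet u ⊆ G.neighborSet v) :
    ¬ G.IsTotalDomCritical := by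
  rintro ⟨-, hcrit⟩
  have hlt := hcrit v hv
  -- the whole vertex set of `G - v` is a total dominating set of `G - v`
  have hall : (G.deleteVert v).IsTotalDomSet ↑(Finset.univ : Finset {x : V // x ≠ v}) := by
    intro x
    obtain ⟨y, hy⟩ : ∃ y, G.Adj (↑x) y := by
      have := hiso (↑x)
      rw [← card_neighborFinset_eq_degree, Finset.card_pos] at this
      obtain ⟨y, hy⟩ := this
      exact ⟨y, (mem_neighborFinset _ _ _).mp hy⟩
    by_cases hyv : y = v
    · subst hyv
      have hdeg : G.degree (↑x) ≠ 1 := fun h1 => hv ⟨↑x, hy.symm, h1⟩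
      have hpos := hiso (↑x)
      have h2 : 1 < (G.neighborFinset (↑x)).card := by
        rw [card_neighborFinset_eq_degree]
        omega
      obtain ⟨z, hz, hzv⟩ := Finset.exists_mem_ne h2 y
      have haz : G.Adj (↑x) z := (mem_neighborFinset G (↑x) z).mp hz
      exact ⟨⟨z, hzv⟩, Finset.mem_coe.mpr (Finset.mem_univ _), haz⟩
    · exact ⟨⟨y, hyv⟩, Finset.mem_coe.mpr (Finset.mem_univ _), hy⟩
  have hne : {n : ℕ | ∃ S : Finset {x : V // x ≠ v},
      (G.deleteVert v).IsTotalDomSet ↑S ∧ S.card = n}.Nonempty :=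
    ⟨_, Finset.univ, hall, rfl⟩
  obtain ⟨S, hS, hScard⟩ := Nat.sInf_mem hne
  -- lift S to a TDS of G
  set T : Finset V := S.map ⟨Subtype.val, Subtype.val_injective⟩ with hT
  -- u's dominator is also a dominator of v
  obtain ⟨w, hwS, hwadj⟩ := hS ⟨u, huv⟩
  have hwadj' : G.Adj u ↑w := hwadj
  have hvw : G.Adj v ↑w := hsub hwadj'
  have hTds : G.IsTotalDomSet ↑T := by
    intro x
    by_cases hxv : x = v
    · subst hxv
      refine ⟨↑w, ?_, hvw⟩
      simp [hT]
      exact ⟨w.2, hwS⟩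
    · obtain ⟨z, hzS, hzadj⟩ := hS ⟨x, hxv⟩
      refine ⟨↑z, ?_, hzadj⟩
      simp [hT]
      exact ⟨z.2, hzS⟩
  have hle : G.totalDomNum ≤ T.card :=
    Nat.sInf_le ⟨T, hTds, rfl⟩
  have hcm : T.card = S.card := Finset.card_map _
  have hs2 : S.card = (G.deleteVert v).totalDomNum := hScard
  omega

end SimpleGraph
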